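/- Let A be a real symmetric positive definite n×n matrix and d ≥ 0. A positive definite matrix X satisfies ρ(A,X) ≤ d (where ρ is the Bures-Wasserstein distance) if and only if there exists a real n×n matrix K with [[X, Kᵀ],[K, I]] ⪰ 0 and Tr(A) + Tr(X) − 2Tr(√A·K) ≤ d². -/

import Mathlib

open Matrix BigOperators

open Classical in
noncomputable def msqrt {n : ℕ} (M : Matrix (Fin n) (Fin n) ℝ) : Matrix (Fin n) (Fin n) ℝ :=
  if h : M.PosSemidef then
    (h.1.eigenvectorUnitary : Matrix (Fin n) (Fin n) ℝ) * diagonal ((↑) ∘ (√·) ∘ h.1.eigenvalues) *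
      (star h.1.eigenvectorUnitary : Matrix (Fin n) (Fin n) ℝ) else 0

noncomputable def fnorm {n : ℕ} (A : Matrix (Fin n) (Fin n) ℝ) : ℝ :=
  Real.sqrt (∑ i, ∑ j, (A i j) ^ 2)



variable {n : ℕ}

lemma msqrt_eq {M : Matrix (Fin n) (Fin n) ℝ} (h : M.PosSemidef) :
    msqrt M = cfc Real.sqrt M := by
  rw [h.1.cfc_eq]; unfold msqrt; rw [dif_pos h]; rfl

lemma msqrt_posSemidef {M : Matrix (Fin n) (Fin n) ℝ} (h : M.PosSemidef) :
    (msqrt M).PosSemidef := by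
  unfold msqrt; rw [dif_pos h]
  have hD : (diagonal ((↑) ∘ (√·) ∘ h.1.eigenvalues) : Matrix (Fin n) (Fin n) ℝ).PosSemidef :=
    Matrix.posSemidef_diagonal_iff.mpr fun i => by simp [Real.sqrt_nonneg]
  have := hD.mul_mul_conjTranspose_same (h.1.eigenvectorUnitary : Matrix (Fin n) (Fin n) ℝ)
  simpa [Matrix.star_eq_conjTranspose] using this

lemma msqrt_mul_self {M : Matrix (Fin n) (Fin n) ℝ} (h : M.PosSemidef) :
    msqrt M * msqrt M = M := by
  rw [msqrt_eq h, ← cfc_mul Real.sqrt Real.sqrt M]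
  conv_rhs => rw [← cfc_id' ℝ M (ha := h.1.isSelfAdjoint)]
  apply cfc_congr
  intro x hx
  obtain ⟨i, rfl⟩ := h.1.spectrum_real_eq_range_eigenvalues ▸ hx
  exact Real.mul_self_sqrt (h.eigenvalues_nonneg i)

lemma msqrt_transpose {M : Matrix (Fin n) (Fin n) ℝ} (h : M.PosSemidef) :
    (msqrt M)ᵀ = msqrt M := by
  have := (msqrt_posSemidef h).isHermitian
  rwa [Matrix.IsHermitian, Matrix.conjTranspose_eq_transpose_of_trivial] at this

lemma posDef_of_posSemidef_det_ne_zero {M : Matrix (Fin n) (Fin n) ℝ}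
    (h : M.PosSemidef) (hdet : M.det ≠ 0) : M.PosDef := by
  exact h.posDef_iff_det_ne_zero.mpr hdet

lemma msqrt_posDef {M : Matrix (Fin n) (Fin n) ℝ} (hM : M.PosDef) :
    (msqrt M).PosDef := by
  have h := hM.posSemidef
  refine posDef_of_posSemidef_det_ne_zero (msqrt_posSemidef h) ?_
  intro h0
  have : M.det = 0 := by
    rw [← msqrt_mul_self h, Matrix.det_mul, h0, mul_zero]
  exact hM.det_pos.ne' this

lemma trace_transpose_mul_self_nonneg (M : Matrix (Fin n) (Fin n) ℝ) :
    0 ≤ (Mᵀ * M).trace := by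
  rw [Matrix.trace]
  refine Finset.sum_nonneg fun i _ => ?_
  rw [Matrix.diag_apply, Matrix.mul_apply]
  refine Finset.sum_nonneg fun j _ => ?_
  simpa [Matrix.transpose_apply] using mul_self_nonneg (M j i)

lemma trace_conj_nonneg {P : Matrix (Fin n) (Fin n) ℝ} (hP : P.PosSemidef)
    (T : Matrix (Fin n) (Fin n) ℝ) : 0 ≤ (T * P * Tᵀ).trace := by
  have := hP.mul_mul_conjTranspose_same T
  rw [Matrix.conjTranspose_eq_transpose_of_trivial] at this
  exact this.trace_nonneg




theorem stmt_15 {n : ℕ} (A : Matrix (Fin n) (Fin n) ℝ) (hA : A.PosDef)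
    (d : ℝ) (hd : 0 ≤ d) (X : Matrix (Fin n) (Fin n) ℝ) (hX : X.PosDef) :
    Real.sqrt (A.trace + X.trace - 2 * (msqrt (msqrt A * X * msqrt A)).trace) ≤ d ↔
    ∃ K : Matrix (Fin n) (Fin n) ℝ, (Matrix.fromBlocks X Kᵀ K 1).PosSemidef ∧
      A.trace + X.trace - 2 * (msqrt A * K).trace ≤ d ^ 2 := by
  -- notation
  set sA := msqrt A with hsA_def
  have hsA_pd : sA.PosDef := msqrt_posDef hA
  have hsA_mul : sA * sA = A := msqrt_mul_self hA.posSemidef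
  have hsA_t : sAᵀ = sA := msqrt_transpose hA.posSemidef
  have hsA_det : IsUnit sA.det := hsA_pd.det_pos.ne'.isUnit
  have hsA_inv_mul : sA⁻¹ * sA = 1 := Matrix.nonsing_inv_mul _ hsA_det
  have hsA_mul_inv : sA * sA⁻¹ = 1 := Matrix.mul_nonsing_inv _ hsA_det
  -- B = sA X sA is positive definite
  have hB_psd : (sA * X * sA).PosSemidef := by
    have := hX.posSemidef.mul_mul_conjTranspose_same sA
    rwa [Matrix.conjTranspose_eq_transpose_of_trivial, hsA_t] at this
  have hB_pd : (sA * X * sA).PosDef := by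
    refine posDef_of_posSemidef_det_ne_zero hB_psd ?_
    rw [Matrix.det_mul, Matrix.det_mul]
    exact mul_ne_zero (mul_ne_zero hsA_pd.det_pos.ne' hX.det_pos.ne') hsA_pd.det_pos.ne'
  set S := msqrt (sA * X * sA) with hS_def
  have hS_pd : S.PosDef := msqrt_posDef hB_pd
  have hS_mul : S * S = sA * X * sA := msqrt_mul_self hB_pd.posSemidef
  have hS_t : Sᵀ = S := msqrt_transpose hB_pd.posSemidef
  have hS_det : IsUnit S.det := hS_pd.det_pos.ne'.isUnit
  constructor
  · -- forward direction
    intro h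
    have hsq : A.trace + X.trace - 2 * S.trace ≤ d ^ 2 :=
      (Real.sqrt_le_left hd).mp h
    refine ⟨S * sA⁻¹, ?_, ?_⟩
    · -- block matrix is PSD
      have hKt : (S * sA⁻¹)ᵀ = sA⁻¹ * S := by
        rw [Matrix.transpose_mul, Matrix.transpose_nonsing_inv, hsA_t, hS_t]
      have hKtK : (S * sA⁻¹)ᵀ * (S * sA⁻¹) = X := by
        rw [hKt]
        calc sA⁻¹ * S * (S * sA⁻¹) = sA⁻¹ * (S * S) * sA⁻¹ := by
              simp only [Matrix.mul_assoc]
          _ = sA⁻¹ * (sA * X * sA) * sA⁻¹ := by rw [hS_mul]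
          _ = (sA⁻¹ * sA) * X * (sA * sA⁻¹) := by simp only [Matrix.mul_assoc]
          _ = X := by rw [hsA_inv_mul, hsA_mul_inv, Matrix.one_mul, Matrix.mul_one]
      set K := S * sA⁻¹ with hK_def
      have hN : Matrix.fromBlocks X Kᵀ K (1 : Matrix (Fin n) (Fin n) ℝ) =
          (Matrix.fromBlocks K 1 0 0)ᴴ * (Matrix.fromBlocks K 1 0 0) := by
        rw [Matrix.fromBlocks_conjTranspose, Matrix.fromBlocks_multiply]
        simp [Matrix.conjTranspose_eq_transpose_of_trivial, hKtK]
      rw [hN]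
      exact Matrix.posSemidef_conjTranspose_mul_self _
    · -- trace identity
      have htr : (sA * (S * sA⁻¹)).trace = S.trace := by
        rw [Matrix.trace_mul_comm, Matrix.mul_assoc, hsA_inv_mul, Matrix.mul_one]
      rw [htr]
      exact hsq
  · -- backward direction
    rintro ⟨K, hBlk, hIneq⟩
    -- Step 1: X - Kᵀ K is PSD
    have hXK : (X - Kᵀ * K).PosSemidef := by
      have h1 : (Matrix.fromBlocks X Kᵀ (Kᵀ)ᴴ (1 : Matrix (Fin n) (Fin n) ℝ)).PosSemidef := by
        rwa [Matrix.conjTranspose_eq_transpose_of_trivial, Matrix.transpose_transpose]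
      haveI : Invertible (1 : Matrix (Fin n) (Fin n) ℝ) := invertibleOne
      have h2 := (Matrix.PosDef.fromBlocks₂₂ X Kᵀ Matrix.PosDef.one).mp h1
      simpa [Matrix.conjTranspose_eq_transpose_of_trivial] using h2
    -- Step 2: trace(sA * K) ≤ trace S
    set R := msqrt S with hR_def
    have hR_pd : R.PosDef := msqrt_posDef hS_pd
    have hR_mul : R * R = S := msqrt_mul_self hS_pd.posSemidef
    have hR_t : Rᵀ = R := msqrt_transpose hS_pd.posSemidef
    have hR_det : IsUnit R.det := hR_pd.det_pos.ne'.isUnit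
    have hR_inv_mul : R⁻¹ * R = 1 := Matrix.nonsing_inv_mul _ hR_det
    have hR_mul_inv : R * R⁻¹ = 1 := Matrix.mul_nonsing_inv _ hR_det
    have hRi_t : (R⁻¹)ᵀ = R⁻¹ := by rw [Matrix.transpose_nonsing_inv, hR_t]
    set Y := K * sA * R⁻¹ with hY_def
    have hY_t : Yᵀ = R⁻¹ * (sA * Kᵀ) := by
      rw [hY_def, Matrix.transpose_mul, Matrix.transpose_mul, hRi_t, hsA_t]
    -- trace(R * Y) = trace(sA * K)
    have htrRY : (R * Y).trace = (sA * K).trace := by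
      rw [hY_def, Matrix.trace_mul_comm]
      rw [Matrix.mul_assoc, Matrix.mul_assoc, hR_inv_mul, Matrix.mul_one,
        Matrix.trace_mul_comm]
    -- trace(Yᵀ Y) ≤ trace S
    have hZ : R⁻¹ * (sA * X * sA) * R⁻¹ = S := by
      rw [← hS_mul, ← hR_mul]
      calc R⁻¹ * (R * R * (R * R)) * R⁻¹
          = (R⁻¹ * R) * (R * R) * (R * R⁻¹) := by simp only [Matrix.mul_assoc]
        _ = R * R := by rw [hR_inv_mul, hR_mul_inv, Matrix.one_mul, Matrix.mul_one]
    have hYtY : Yᵀ * Y = R⁻¹ * (sA * (Kᵀ * K) * sA) * R⁻¹ := by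
      rw [hY_t, hY_def]
      simp only [Matrix.mul_assoc]
    have hdiff : (R⁻¹ * sA) * (X - Kᵀ * K) * (R⁻¹ * sA)ᵀ = S - Yᵀ * Y := by
      have ht : (R⁻¹ * sA)ᵀ = sA * R⁻¹ := by
        rw [Matrix.transpose_mul, hRi_t, hsA_t]
      rw [ht, Matrix.mul_sub, Matrix.sub_mul, hYtY, ← hZ]
      simp only [Matrix.mul_assoc]
    have htrYtY : (Yᵀ * Y).trace ≤ S.trace := by
      have h0 : 0 ≤ ((R⁻¹ * sA) * (X - Kᵀ * K) * (R⁻¹ * sA)ᵀ).trace :=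
        trace_conj_nonneg hXK _
      rw [hdiff, Matrix.trace_sub] at h0
      linarith
    -- AM-GM: 2 trace(R Y) ≤ trace(R R) + trace(Yᵀ Y)
    have hamgm : 2 * (R * Y).trace ≤ S.trace + (Yᵀ * Y).trace := by
      have h0 : 0 ≤ ((R - Y)ᵀ * (R - Y)).trace := trace_transpose_mul_self_nonneg _
      have hexp : (R - Y)ᵀ * (R - Y) = R * R - Rᵀ * Y - Yᵀ * R + Yᵀ * Y := by
        rw [Matrix.transpose_sub, Matrix.sub_mul, Matrix.mul_sub, Matrix.mul_sub, hR_t]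
        abel
      rw [hexp] at h0
      have htr1 : (Rᵀ * Y).trace = (R * Y).trace := by rw [hR_t]
      have htr2 : (Yᵀ * R).trace = (R * Y).trace := by
        rw [← Matrix.trace_transpose (Yᵀ * R), Matrix.transpose_mul,
          Matrix.transpose_transpose, hR_t]
      rw [Matrix.trace_add, Matrix.trace_sub, Matrix.trace_sub, htr1, htr2, hR_mul] at h0
      linarith
    have hfin : (sA * K).trace ≤ S.trace := by
      rw [← htrRY]; linarith
    have : A.trace + X.trace - 2 * S.trace ≤ d ^ 2 := by linarith
    exact (Real.sqrt_le_left hd).mpr this
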